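/- arXiv:2405.18437 — 2 statements merged into one kernel-verified Lean document; each statement's English description precedes it below -/
import Mathlib

section
/- Let ψ: [0,∞) → ℝ be twice continuously differentiable with ψ'' decreasing on [0,∞). For z ∈ [0,∞) define c_ψ(z) = ψ''(0) if z = 0, and c_ψ(z) = 2(ψ(0) − ψ(z) + ψ'(z)·z)/z² otherwise. Then for every x ∈ [0,∞), ψ(x) ≤ ψ(z) + ψ'(z)(x − z) + (1/2)·c_ψ(z)·(x − z)². -/
open Set

private lemma mono_aux {f f' : ℝ → ℝ} {s : Set ℝ}
    (hs : Convex ℝ s) (hsub : s ⊆ Ici 0)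
    (hf : ∀ x ∈ Ici (0:ℝ), HasDerivWithinAt f (f' x) (Ici 0) x)
    (h0 : ∀ x ∈ s, 0 ≤ f' x) : MonotoneOn f s := by
  refine monotoneOn_of_hasDerivWithinAt_nonneg hs
    (fun x hx => ((hf x (hsub hx)).continuousWithinAt).mono hsub)
    (fun x hx => (hf x (hsub (interior_subset hx))).mono (interior_subset.trans hsub))
    (fun x hx => h0 x (interior_subset hx))

private lemma anti_aux {f f' : ℝ → ℝ} {s : Set ℝ}
    (hs : Convex ℝ s) (hsub : s ⊆ Ici 0)
    (hf : ∀ x ∈ Ici (0:ℝ), HasDerivWithinAt f (f' x) (Ici 0) x)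
    (h0 : ∀ x ∈ s, f' x ≤ 0) : AntitoneOn f s := by
  refine antitoneOn_of_hasDerivWithinAt_nonpos hs
    (fun x hx => ((hf x (hsub hx)).continuousWithinAt).mono hsub)
    (fun x hx => (hf x (hsub (interior_subset hx))).mono (interior_subset.trans hsub))
    (fun x hx => h0 x (interior_subset hx))

private lemma key {h h' h'' : ℝ → ℝ} {z t₀ : ℝ}
    (hd1 : ∀ x ∈ Ici (0:ℝ), HasDerivWithinAt h (h' x) (Ici 0) x)
    (hd2 : ∀ x ∈ Ici (0:ℝ), HasDerivWithinAt h' (h'' x) (Ici 0) x)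
    (ht0 : t₀ ∈ Icc 0 z)
    (hh0 : h 0 = 0) (hhz : h z = 0) (hh'z : h' z = 0)
    (hneg : ∀ x ∈ Icc (0:ℝ) t₀, h'' x ≤ 0)
    (hpos : ∀ x ∈ Ici t₀, 0 ≤ h'' x) :
    ∀ x ∈ Ici (0:ℝ), 0 ≤ h x := by
  obtain ⟨ht00, htz⟩ := ht0
  have hz0 : (0:ℝ) ≤ z := ht00.trans htz
  have hIt : Ici t₀ ⊆ Ici (0:ℝ) := Ici_subset_Ici.mpr ht00
  -- h' is monotone on [t₀, ∞)
  have hmono' : MonotoneOn h' (Ici t₀) := mono_aux (convex_Ici t₀) hIt hd2 hpos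
  have hzt : z ∈ Ici t₀ := mem_Ici.mpr htz
  -- h is monotone on [z, ∞)
  have hA : MonotoneOn h (Ici z) := by
    refine mono_aux (convex_Ici z) (Ici_subset_Ici.mpr hz0) hd1 (fun x hx => ?_)
    have := hmono' hzt (mem_Ici.mpr (htz.trans hx)) hx
    linarith
  -- h is antitone on [t₀, z]
  have hB : AntitoneOn h (Icc t₀ z) := by
    refine anti_aux (convex_Icc t₀ z) (fun x hx => le_trans ht00 hx.1) hd1 (fun x hx => ?_)
    have := hmono' (mem_Ici.mpr hx.1) hzt hx.2
    linarith
  have hht0 : 0 ≤ h t₀ := hhz ▸ hB (left_mem_Icc.mpr htz) (right_mem_Icc.mpr htz) htz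
  -- h is concave on [0, t₀]
  have hsub0 : Icc (0:ℝ) t₀ ⊆ Ici 0 := fun x hx => hx.1
  have hanti' : AntitoneOn h' (Icc 0 t₀) := anti_aux (convex_Icc 0 t₀) hsub0 hd2 hneg
  have hconc : ConcaveOn ℝ (Icc 0 t₀) h := by
    refine AntitoneOn.concaveOn_of_deriv (convex_Icc 0 t₀)
      (fun x hx => ((hd1 x (hsub0 hx)).continuousWithinAt).mono hsub0) ?_ ?_
    · rw [interior_Icc]
      intro x hx
      exact ((hd1 x (mem_Ici.mpr hx.1.le)).mono (fun y hy => hy.1.le)).differentiableWithinAt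
    · rw [interior_Icc]
      intro x hx y hy hxy
      have dx : deriv h x = h' x :=
        ((hd1 x (mem_Ici.mpr hx.1.le)).hasDerivAt (Ici_mem_nhds hx.1)).deriv
      have dy : deriv h y = h' y :=
        ((hd1 y (mem_Ici.mpr hy.1.le)).hasDerivAt (Ici_mem_nhds hy.1)).deriv
      rw [dx, dy]
      exact hanti' ⟨hx.1.le, hx.2.le⟩ ⟨hy.1.le, hy.2.le⟩ hxy
  -- conclusion
  intro x hx
  rcases le_total x t₀ with hc | hc
  · have := hconc.min_le_of_mem_Icc (left_mem_Icc.mpr ht00) (right_mem_Icc.mpr ht00)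
      (mem_Icc.mpr ⟨hx, hc⟩)
    rw [hh0] at this
    exact le_trans (le_min le_rfl hht0) this
  · rcases le_total x z with hc2 | hc2
    · have := hB (mem_Icc.mpr ⟨hc, hc2⟩) (right_mem_Icc.mpr htz) hc2
      linarith [hhz]
    · have := hA self_mem_Ici (mem_Ici.mpr hc2) hc2
      linarith [hhz]

private lemma stepBC {ψ ψ' ψ'' : ℝ → ℝ}
    (hd1 : ∀ x ∈ Ici (0:ℝ), HasDerivWithinAt ψ (ψ' x) (Ici 0) x)
    (hd2 : ∀ x ∈ Ici (0:ℝ), HasDerivWithinAt ψ' (ψ'' x) (Ici 0) x)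
    {z w : ℝ} (hz : 0 ≤ z)
    (hw : ∀ x ∈ Icc (0:ℝ) z, ψ'' w ≤ ψ'' x) :
    ψ'' w * z ^ 2 / 2 ≤ ψ 0 - ψ z + ψ' z * z := by
  set G : ℝ → ℝ := fun x => ψ 0 - ψ x + ψ' x * x - ψ'' w / 2 * x ^ 2 with hG
  have hdG : ∀ x ∈ Ici (0:ℝ), HasDerivWithinAt G (x * (ψ'' x - ψ'' w)) (Ici 0) x := by
    intro x hx
    have hsq : HasDerivAt (fun y : ℝ => y ^ 2) (2 * x) x := by
      simpa using (hasDerivAt_id x).fun_pow 2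
    have hq : HasDerivWithinAt (fun y : ℝ => ψ'' w / 2 * y ^ 2) (ψ'' w / 2 * (2 * x)) (Ici 0) x :=
      (hsq.const_mul (ψ'' w / 2)).hasDerivWithinAt
    have hmul : HasDerivWithinAt (fun y => ψ' y * y) (ψ'' x * x + ψ' x * 1) (Ici 0) x :=
      (hd2 x hx).mul ((hasDerivAt_id x).hasDerivWithinAt)
    have hfull := (((hasDerivWithinAt_const x (Ici 0) (ψ 0)).fun_sub (hd1 x hx)).fun_add hmul).fun_sub hq
    refine hfull.congr_deriv ?_
    ring
  have hmono : MonotoneOn G (Icc 0 z) := by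
    refine mono_aux (convex_Icc 0 z) (fun x hx => hx.1) hdG (fun x hx => ?_)
    exact mul_nonneg hx.1 (sub_nonneg.mpr (hw x hx))
  have h00 : G 0 = 0 := by simp [hG]
  have hfin := hmono (left_mem_Icc.mpr hz) (right_mem_Icc.mpr hz) hz
  rw [h00] at hfin
  simp only [hG] at hfin
  linarith

theorem stmt_0 (ψ ψ' ψ'' : ℝ → ℝ)
    (hd1 : ∀ x ∈ Ici (0:ℝ), HasDerivWithinAt ψ (ψ' x) (Ici 0) x)
    (hd2 : ∀ x ∈ Ici (0:ℝ), HasDerivWithinAt ψ' (ψ'' x) (Ici 0) x)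
    (hcont : ContinuousOn ψ'' (Ici 0))
    (hdec : AntitoneOn ψ'' (Ici 0))
    (z : ℝ) (hz : z ∈ Ici (0:ℝ)) :
    ∀ x ∈ Ici (0:ℝ),
      ψ x ≤ ψ z + ψ' z * (x - z) +
        (1/2) * (if z = 0 then ψ'' 0 else 2 * (ψ 0 - ψ z + ψ' z * z) / z ^ 2) * (x - z) ^ 2 := by
  intro x hx
  set c : ℝ := if z = 0 then ψ'' 0 else 2 * (ψ 0 - ψ z + ψ' z * z) / z ^ 2 with hc
  set h : ℝ → ℝ := fun y => ψ z + ψ' z * (y - z) + 1/2 * c * (y - z) ^ 2 - ψ y with hh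
  suffices hkey : ∀ y ∈ Ici (0:ℝ), 0 ≤ h y by
    have := hkey x hx
    simp only [hh] at this
    linarith
  have Hd1 : ∀ y ∈ Ici (0:ℝ),
      HasDerivWithinAt h (ψ' z + c * (y - z) - ψ' y) (Ici 0) y := by
    intro y hy
    have p1 : HasDerivAt (fun y : ℝ => y - z) 1 y := (hasDerivAt_id y).sub_const z
    have p2 : HasDerivAt (fun y : ℝ => (y - z) ^ 2) (2 * (y - z)) y := by
      simpa using p1.fun_pow 2
    have hq := (((p1.const_mul (ψ' z)).const_add (ψ z)).fun_add
      (p2.const_mul (1/2 * c))).hasDerivWithinAt.fun_sub (hd1 y hy)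
    refine hq.congr_deriv ?_
    ring
  have Hd2 : ∀ y ∈ Ici (0:ℝ),
      HasDerivWithinAt (fun y => ψ' z + c * (y - z) - ψ' y) (c - ψ'' y) (Ici 0) y := by
    intro y hy
    have p1 : HasDerivAt (fun y : ℝ => y - z) 1 y := (hasDerivAt_id y).sub_const z
    have hq := ((p1.const_mul c).const_add (ψ' z)).hasDerivWithinAt.fun_sub (hd2 y hy)
    refine hq.congr_deriv ?_
    ring
  by_cases hz0 : z = 0
  · subst hz0
    have hceq : c = ψ'' 0 := by rw [hc, if_pos rfl]
    refine key Hd1 Hd2 (t₀ := 0) (left_mem_Icc.mpr le_rfl) ?_ ?_ ?_ ?_ ?_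
    · simp [hh]
    · simp [hh]
    · ring
    · intro y hy
      have : y = 0 := le_antisymm hy.2 hy.1
      subst this
      rw [hceq]
      simp
    · intro y hy
      have := hdec self_mem_Ici hy hy
      rw [hceq]
      linarith
  · have hzpos : 0 < z := lt_of_le_of_ne hz (Ne.symm hz0)
    have hcz : c * z ^ 2 / 2 = ψ 0 - ψ z + ψ' z * z := by
      rw [hc, if_neg hz0]
      field_simp
      try ring
    have hB : ψ'' z ≤ c := by
      have := stepBC hd1 hd2 hzpos.le
        (fun t ht => hdec (mem_Ici.mpr ht.1) hz ht.2)
      nlinarith [sq_nonneg z, mul_pos hzpos hzpos]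
    have hC : c ≤ ψ'' 0 := by
      have := stepBC (ψ := fun y => -ψ y) (ψ' := fun y => -ψ' y) (ψ'' := fun y => -ψ'' y)
        (fun t ht => (hd1 t ht).neg) (fun t ht => (hd2 t ht).neg) hzpos.le (w := 0)
        (fun t ht => neg_le_neg (hdec self_mem_Ici (mem_Ici.mpr ht.1) ht.1))
      nlinarith [mul_pos hzpos hzpos]
    obtain ⟨t₀, ht₀mem, ht₀eq⟩ :=
      intermediate_value_Icc' hzpos.le (hcont.mono (fun t ht => ht.1)) ⟨hB, hC⟩
    refine key Hd1 Hd2 ht₀mem ?_ ?_ ?_ ?_ ?_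
    · simp only [hh]
      linear_combination hcz
    · simp only [hh]; ring
    · ring
    · intro y hy
      have := hdec (mem_Ici.mpr hy.1) (mem_Ici.mpr ht₀mem.1) hy.2
      rw [ht₀eq] at this
      linarith
    · intro y hy
      have := hdec (mem_Ici.mpr ht₀mem.1) (mem_Ici.mpr (le_trans ht₀mem.1 hy)) hy
      rw [ht₀eq] at this
      linarith
end

section
/- Fix K ≥ 1, weights u_1,…,u_N ≥ 0 with ∑_n u_n > 0, and points z_1,…,z_N in the interior of the unit simplex of ℝ^K. Define F(α) = ∑_{n=1}^N u_n ( ∑_{i=1}^K −(α_i − 1) log z_{n,i} + ∑_{i=1}^K log Γ(α_i) − log Γ(∑_{i=1}^K α_i) ) for α ∈ (0,∞)^K. Let φ(t) = log Γ(t+1) and c(t) = φ''(0) if t = 0 and c(t) = 2(φ(0) − φ(t) + φ'(t)t)/t² otherwise. Then for every β ∈ (0,∞)^K, the function q(α; β) = ∑_n u_n [ ∑_i ( −(α_i − 1) log z_{n,i} − log α_i + φ(β_i) + φ'(β_i)(α_i − β_i) + (c(β_i)/2)(α_i − β_i)² ) − log Γ(∑_i β_i) − (∑_i (α_i − β_i))(log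 Γ)'(∑_i β_i) ] satisfies q(α; β) ≥ F(α) for all α ∈ (0,∞)^K and q(β; β) = F(β). -/
open Finset

noncomputable def phi (t : ℝ) : ℝ := Real.log (Real.Gamma (t + 1))

noncomputable def curv (t : ℝ) : ℝ :=
  if t = 0 then iteratedDeriv 2 phi 0
  else 2 * (phi 0 - phi t + deriv phi t * t) / t ^ 2

section Aux
open Real Filter Set

noncomputable def psiSeq (n : ℕ) (x : ℝ) : ℝ :=
  Real.log n - ∑ m ∈ Finset.range (n + 1), 1 / (x + m)

noncomputable def psi (x : ℝ) : ℝ := limUnder Filter.atTop (fun n => psiSeq n x)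

lemma hasDerivAt_logGammaSeq {x : ℝ} (hx : 0 < x) (n : ℕ) :
    HasDerivAt (fun y => Real.BohrMollerup.logGammaSeq y n) (psiSeq n x) x := by
  have h1 : HasDerivAt (fun y : ℝ => y * Real.log n + Real.log (Nat.factorial n : ℝ)) (Real.log n) x := by
    simpa using ((hasDerivAt_id x).mul_const (Real.log n)).add_const (Real.log (Nat.factorial n : ℝ))
  have h2 : HasDerivAt (fun y : ℝ => ∑ m ∈ Finset.range (n + 1), Real.log (y + m))
      (∑ m ∈ Finset.range (n + 1), 1 / (x + m)) x := by
    apply HasDerivAt.fun_sum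
    intro m _
    have hxm : x + (m : ℝ) ≠ 0 := by positivity
    have := (Real.hasDerivAt_log hxm).comp x ((hasDerivAt_id x).add_const (m : ℝ))
    simpa [one_div, Function.comp_def] using this
  have := h1.fun_sub h2
  simpa [Real.BohrMollerup.logGammaSeq, psiSeq, sub_eq_add_neg, add_assoc] using this

-- 1/m bounds on log increments
lemma log_succ_sub_le {m : ℕ} (hm : 1 ≤ m) :
    Real.log (m + 1) - Real.log m ≤ 1 / m := by
  have hm' : (0:ℝ) < m := by exact_mod_cast hm
  rw [← Real.log_div (by positivity) (by positivity)]
  have := Real.log_le_sub_one_of_pos (x := ((m:ℝ)+1)/m) (by positivity)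
  calc Real.log (((m:ℝ)+1)/m) ≤ ((m:ℝ)+1)/m - 1 := this
    _ = 1 / m := by field_simp; ring

lemma inv_succ_le_log_sub {m : ℕ} (hm : 1 ≤ m) :
    1 / ((m:ℝ) + 1) ≤ Real.log (m + 1) - Real.log m := by
  have hm' : (0:ℝ) < m := by exact_mod_cast hm
  rw [← Real.log_div (by positivity) (by positivity)]
  have := Real.log_le_sub_one_of_pos (x := (m:ℝ)/((m:ℝ)+1)) (by positivity)
  have h2 : Real.log ((m:ℝ)/((m:ℝ)+1)) = - Real.log (((m:ℝ)+1)/m) := by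
    rw [← Real.log_inv]; congr 1; field_simp
  rw [h2] at this
  have : Real.log (((m:ℝ)+1)/m) ≥ 1 - (m:ℝ)/((m:ℝ)+1) := by linarith
  calc 1 / ((m:ℝ)+1) = 1 - (m:ℝ)/((m:ℝ)+1) := by field_simp; ring
    _ ≤ Real.log (((m:ℝ)+1)/m) := this

lemma claimB {n : ℕ} (hn : 1 ≤ n) : ∀ p, n ≤ p →
    ∑ m ∈ Finset.Ico n p, 1 / ((m:ℝ) + 1) ≤ Real.log p - Real.log n := by
  intro p hp
  induction p, hp using Nat.le_induction with
  | base => simp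
  | succ p hp ih =>
    rw [Finset.sum_Ico_succ_top hp]
    have h1 := inv_succ_le_log_sub (le_trans hn hp)
    push_cast at h1 ⊢
    linarith

lemma claimA {n : ℕ} (hn : 1 ≤ n) : ∀ p, n ≤ p →
    Real.log p - Real.log n ≤ (∑ m ∈ Finset.Ico n p, 1 / ((m:ℝ) + 1)) + (1/n - 1/p) := by
  intro p hp
  induction p, hp using Nat.le_induction with
  | base => simp
  | succ p hp ih =>
    rw [Finset.sum_Ico_succ_top hp]
    have hp1 : 1 ≤ p := le_trans hn hp
    have h1 := log_succ_sub_le hp1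
    have hp' : (0:ℝ) < p := by exact_mod_cast hp1
    have h2 : 1 / ((p:ℝ)+1) ≤ 1 / p := by
      apply one_div_le_one_div_of_le hp'; linarith
    push_cast at h1 ⊢
    linarith

lemma claimC {x : ℝ} (hx : 0 ≤ x) {n : ℕ} (hn : 1 ≤ n) : ∀ p, n ≤ p →
    (0 ≤ ∑ m ∈ Finset.Ico n p, (1 / ((m:ℝ) + 1) - 1 / (x + ((m:ℝ) + 1)))) ∧
    (∑ m ∈ Finset.Ico n p, (1 / ((m:ℝ) + 1) - 1 / (x + ((m:ℝ) + 1)))) ≤ x * (1/n - 1/p) := by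
  intro p hp
  induction p, hp using Nat.le_induction with
  | base => simp
  | succ p hp ih =>
    obtain ⟨ih0, ih1⟩ := ih
    rw [Finset.sum_Ico_succ_top hp]
    have hp1 : 1 ≤ p := le_trans hn hp
    have hp' : (0:ℝ) < p := by exact_mod_cast hp1
    have hterm0 : 0 ≤ 1 / ((p:ℝ) + 1) - 1 / (x + ((p:ℝ) + 1)) := by
      have : 1 / (x + ((p:ℝ)+1)) ≤ 1 / ((p:ℝ)+1) := by
        apply one_div_le_one_div_of_le (by positivity); linarith
      linarith
    constructor
    · positivity
    · have hterm1 : 1 / ((p:ℝ) + 1) - 1 / (x + ((p:ℝ) + 1)) ≤ x * (1/p - 1/(p+1)) := by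
        rw [div_sub_div _ _ (by positivity) (by positivity)]
        rw [div_le_iff₀ (by positivity)]
        have e : ((p:ℝ)+1) - (x + ((p:ℝ)+1))*1 = -x := by ring
        have h3 : x * (1/(p:ℝ) - 1/((p:ℝ)+1)) = x / ((p:ℝ)*((p:ℝ)+1)) := by
          field_simp; ring
        rw [h3, div_mul_eq_mul_div, le_div_iff₀ (by positivity)]
        ring_nf
        nlinarith [mul_nonneg hx (le_of_lt hp'), mul_nonneg (mul_nonneg hx hx) hp'.le]
      push_cast
      push_cast at ih1 hterm1
      linarith

lemma psiSeq_diff {x : ℝ} (hx : 0 < x) {n p : ℕ} (hn : 1 ≤ n) (hp : n ≤ p) :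
    0 ≤ psiSeq p x - psiSeq n x ∧ psiSeq p x - psiSeq n x ≤ (1 + x) / n := by
  have hdiff : psiSeq p x - psiSeq n x =
      (Real.log p - Real.log n) - ∑ m ∈ Finset.Ico (n+1) (p+1), 1 / (x + m) := by
    unfold psiSeq
    rw [Finset.sum_Ico_eq_sub _ (by omega)]
    ring
  have hshift : ∑ m ∈ Finset.Ico (n+1) (p+1), 1 / (x + (m:ℝ)) =
      ∑ m ∈ Finset.Ico n p, 1 / (x + ((m:ℝ) + 1)) := by
    rw [← Finset.sum_Ico_add' (fun m : ℕ => 1 / (x + (m:ℝ))) n p 1]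
    apply Finset.sum_congr rfl
    intro m _
    push_cast
    ring_nf
  have key : psiSeq p x - psiSeq n x =
      (Real.log p - Real.log n - ∑ m ∈ Finset.Ico n p, 1 / ((m:ℝ)+1))
      + ∑ m ∈ Finset.Ico n p, (1 / ((m:ℝ) + 1) - 1 / (x + ((m:ℝ) + 1))) := by
    rw [hdiff, hshift, Finset.sum_sub_distrib]
    ring
  obtain ⟨hC0, hC1⟩ := claimC hx.le hn p hp
  have hB := claimB hn p hp
  have hA := claimA hn p hp
  have hn' : (0:ℝ) < n := by exact_mod_cast hn
  have hp' : (0:ℝ) < p := by exact_mod_cast le_trans hn hp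
  constructor
  · rw [key]; linarith
  · rw [key]
    have h1 : Real.log p - Real.log n - ∑ m ∈ Finset.Ico n p, 1 / ((m:ℝ)+1) ≤ 1/n := by
      have : 0 < 1/(p:ℝ) := by positivity
      linarith
    have h2 : x * (1/(n:ℝ) - 1/p) ≤ x * (1/n) := by
      have : 0 < 1/(p:ℝ) := by positivity
      nlinarith
    have : (1+x)/(n:ℝ) = 1/n + x * (1/n) := by field_simp
    rw [this]
    linarith

lemma cauchy_psiSeq {x : ℝ} (hx : 0 < x) : CauchySeq (fun n => psiSeq n x) := by
  rw [Metric.cauchySeq_iff']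
  intro ε hε
  obtain ⟨N, hN⟩ := exists_nat_gt ((1 + x) / ε)
  refine ⟨max N 1, fun n hn => ?_⟩
  have h1 : 1 ≤ max N 1 := le_max_right _ _
  obtain ⟨hd0, hd1⟩ := psiSeq_diff hx h1 hn
  rw [Real.dist_eq, abs_of_nonneg hd0]
  have hM : (0:ℝ) < (max N 1 : ℕ) := by exact_mod_cast h1
  have hNM : ((1:ℝ) + x)/ε < ((max N 1 : ℕ) : ℝ) := by
    calc ((1:ℝ)+x)/ε < N := hN
      _ ≤ ((max N 1 : ℕ) : ℝ) := by exact_mod_cast le_max_left N 1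
  have hfin : (1 + x) / ((max N 1 : ℕ) : ℝ) < ε := by
    rw [div_lt_iff₀ hM]
    rw [div_lt_iff₀ hε] at hNM
    linarith
  linarith

lemma tendsto_psiSeq {x : ℝ} (hx : 0 < x) :
    Filter.Tendsto (fun n => psiSeq n x) Filter.atTop (nhds (psi x)) :=
  (cauchy_psiSeq hx).tendsto_limUnder

lemma psi_sub_psiSeq {x : ℝ} (hx : 0 < x) {n : ℕ} (hn : 1 ≤ n) :
    0 ≤ psi x - psiSeq n x ∧ psi x - psiSeq n x ≤ (1 + x) / n := by
  have ht : Filter.Tendsto (fun p => psiSeq p x - psiSeq n x) Filter.atTop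
      (nhds (psi x - psiSeq n x)) := (tendsto_psiSeq hx).sub tendsto_const_nhds
  constructor
  · apply ge_of_tendsto ht
    filter_upwards [Filter.eventually_ge_atTop n] with p hp
    exact (psiSeq_diff hx hn hp).1
  · apply le_of_tendsto ht
    filter_upwards [Filter.eventually_ge_atTop n] with p hp
    exact (psiSeq_diff hx hn hp).2

lemma tendstoUniformlyOn_psiSeq {b : ℝ} (hb : 0 < b) :
    TendstoUniformlyOn psiSeq psi Filter.atTop (Set.Ioo 0 b) := by
  rw [Metric.tendstoUniformlyOn_iff]
  intro ε hε
  obtain ⟨N, hN⟩ := exists_nat_gt ((1 + b) / ε)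
  filter_upwards [Filter.eventually_ge_atTop (max N 1)] with n hn x hx
  have h1 : 1 ≤ n := le_trans (le_max_right N 1) hn
  obtain ⟨hd0, hd1⟩ := psi_sub_psiSeq hx.1 h1
  rw [Real.dist_eq, abs_of_nonneg hd0]
  have hn' : (0:ℝ) < n := by exact_mod_cast h1
  have hNn : ((1:ℝ) + b)/ε < (n:ℝ) := by
    calc ((1:ℝ)+b)/ε < N := hN
      _ ≤ ((max N 1 : ℕ) : ℝ) := by exact_mod_cast le_max_left N 1
      _ ≤ (n:ℝ) := by exact_mod_cast hn
  have hbound : (1 + b) / (n:ℝ) < ε := by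
    rw [div_lt_iff₀ hn']
    rw [div_lt_iff₀ hε] at hNn
    linarith
  have hxb : (1 + x)/(n:ℝ) ≤ (1 + b)/(n:ℝ) := by
    gcongr
    exact hx.2.le
  linarith

lemma hasDerivAt_logGamma {x : ℝ} (hx : 0 < x) :
    HasDerivAt (fun y => Real.log (Real.Gamma y)) (psi x) x := by
  apply hasDerivAt_of_tendstoUniformlyOn (s := Set.Ioo 0 (x+1))
    (f := fun n y => Real.BohrMollerup.logGammaSeq y n) (f' := fun n y => psiSeq n y)
    isOpen_Ioo (tendstoUniformlyOn_psiSeq (by linarith))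
  · filter_upwards with n y hy
    exact hasDerivAt_logGammaSeq hy.1 n
  · intro y hy
    exact Real.BohrMollerup.tendsto_log_gamma hy.1
  · exact ⟨hx, by linarith⟩

lemma concaveOn_psiSeq (n : ℕ) : ConcaveOn ℝ (Set.Ioi 0) (psiSeq n) := by
  have h1 : ConvexOn ℝ (Set.Ioi (0:ℝ)) (fun x : ℝ => ∑ m ∈ Finset.range (n+1), 1/(x+m)) := by
    refine ⟨convex_Ioi 0, fun x hx y hy a b ha hb hab => ?_⟩
    simp only [smul_eq_mul, Finset.mul_sum, ← Finset.sum_add_distrib]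
    apply Finset.sum_le_sum
    intro m _
    have hxm : x + (m:ℝ) ∈ Set.Ioi (0:ℝ) := by
      simp only [Set.mem_Ioi] at hx ⊢; positivity
    have hym : y + (m:ℝ) ∈ Set.Ioi (0:ℝ) := by
      simp only [Set.mem_Ioi] at hy ⊢; positivity
    have := (convexOn_zpow (𝕜 := ℝ) (-1)).2 hxm hym ha hb hab
    simp only [zpow_neg, zpow_one, smul_eq_mul] at this ⊢
    have he : a * (x + (m:ℝ)) + b * (y + (m:ℝ)) = a * x + b * y + (m:ℝ) := by
      nlinarith [hab]
    rw [he] at this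
    simpa [one_div] using this
  have h2 : ConcaveOn ℝ (Set.Ioi (0:ℝ)) (fun _ : ℝ => Real.log n) := concaveOn_const _ (convex_Ioi 0)
  have := h2.sub h1
  exact this

lemma concaveOn_psi : ConcaveOn ℝ (Set.Ioi 0) psi := by
  refine ⟨convex_Ioi 0, fun x hx y hy a b ha hb hab => ?_⟩
  have hmem : a • x + b • y ∈ Set.Ioi (0:ℝ) := (convex_Ioi 0) hx hy ha hb hab
  have ht1 : Filter.Tendsto (fun n => a • psiSeq n x + b • psiSeq n y) Filter.atTop
      (nhds (a • psi x + b • psi y)) :=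
    ((tendsto_psiSeq hx).const_smul a).add ((tendsto_psiSeq hy).const_smul b)
  have ht2 : Filter.Tendsto (fun n => psiSeq n (a • x + b • y)) Filter.atTop
      (nhds (psi (a • x + b • y))) := tendsto_psiSeq hmem
  apply le_of_tendsto_of_tendsto' ht1 ht2
  intro n
  exact (concaveOn_psiSeq n).2 hx hy ha hb hab


lemma hasDerivAt_phi {t : ℝ} (ht : -1 < t) : HasDerivAt phi (psi (t + 1)) t := by
  have h1 : HasDerivAt (fun y => Real.log (Real.Gamma y)) (psi (t+1)) (t+1) :=
    hasDerivAt_logGamma (by linarith)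
  have h2 : HasDerivAt (fun y : ℝ => y + 1) 1 t := (hasDerivAt_id t).add_const 1
  have := h1.comp t h2
  simp only [Function.comp_def, mul_one] at this
  exact this

lemma deriv_phi {t : ℝ} (ht : -1 < t) : deriv phi t = psi (t + 1) :=
  (hasDerivAt_phi ht).deriv

lemma phi_zero : phi 0 = 0 := by simp [phi, Real.Gamma_one]

lemma logGamma_eq {x : ℝ} (hx : 0 < x) :
    Real.log (Real.Gamma x) = phi x - Real.log x := by
  unfold phi
  rw [Real.Gamma_add_one hx.ne', Real.log_mul hx.ne' (Real.Gamma_pos_of_pos hx).ne']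
  ring

lemma concaveOn_psi_shift : ConcaveOn ℝ (Set.Ioi 0) (fun t : ℝ => psi (t + 1)) := by
  refine ⟨convex_Ioi 0, fun x hx y hy a b ha hb hab => ?_⟩
  have hx1 : x + 1 ∈ Set.Ioi (0:ℝ) := by simp only [Set.mem_Ioi] at hx ⊢; linarith
  have hy1 : y + 1 ∈ Set.Ioi (0:ℝ) := by simp only [Set.mem_Ioi] at hy ⊢; linarith
  have := concaveOn_psi.2 hx1 hy1 ha hb hab
  have he : a • (x + 1) + b • (y + 1) = a • x + b • y + 1 := by
    simp only [smul_eq_mul]; nlinarith [hab]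
  rw [he] at this
  exact this

lemma majorant {β t : ℝ} (hβ : 0 < β) (ht : 0 < t) :
    phi t ≤ phi β + deriv phi β * (t - β) +
      (2 * (phi 0 - phi β + deriv phi β * β) / β ^ 2) / 2 * (t - β) ^ 2 := by
  set c : ℝ := 2 * (phi 0 - phi β + deriv phi β * β) / β ^ 2 with hc
  set g : ℝ → ℝ := fun y => phi β + deriv phi β * (y - β) + c / 2 * (y - β) ^ 2 - phi y
    with hg
  set G : ℝ → ℝ := fun y => deriv phi β + c * (y - β) - psi (y + 1) with hG
  have hder : ∀ y : ℝ, -1 < y → HasDerivAt g (G y) y := by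
    intro y hy
    have h1 : HasDerivAt (fun y : ℝ => phi β + deriv phi β * (y - β) + c / 2 * (y - β) ^ 2)
        (deriv phi β + c * (y - β)) y := by
      have hd1 : HasDerivAt (fun y : ℝ => y - β) 1 y := (hasDerivAt_id y).sub_const β
      have hd2 : HasDerivAt (fun y : ℝ => deriv phi β * (y - β)) (deriv phi β) y := by
        simpa using hd1.const_mul (deriv phi β)
      have hd3 : HasDerivAt (fun y : ℝ => c / 2 * (y - β) ^ 2) (c * (y - β)) y := by
        have := (hd1.fun_pow 2).const_mul (c / 2)
        exact this.congr_deriv (by ring)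
      simpa using (hd2.const_add (phi β)).fun_add hd3
    exact h1.sub (hasDerivAt_phi hy)
  have hcont : ∀ y : ℝ, -1 < y → ContinuousAt g y := fun y hy => (hder y hy).continuousAt
  have hg0 : g 0 = 0 := by
    have hβ2 : β ^ 2 ≠ 0 := by positivity
    simp only [hg, hc, phi_zero]
    field_simp
    ring
  have hgβ : g β = 0 := by simp [hg]
  have hGβ : G β = 0 := by
    simp [hG, deriv_phi (by linarith : (-1:ℝ) < β)]
  -- Rolle
  obtain ⟨ξ, hξmem, hξ⟩ : ∃ ξ ∈ Set.Ioo (0:ℝ) β, deriv g ξ = 0 := by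
    apply exists_deriv_eq_zero hβ
    · intro y hy
      exact (hcont y (by simp only [Set.mem_Icc] at hy; linarith)).continuousWithinAt
    · rw [hg0, hgβ]
  have hGξ : G ξ = 0 := by
    rw [← (hder ξ (by linarith [hξmem.1])).deriv]
    exact hξ
  have hξβ : ξ < β := hξmem.2
  have hξ0 : 0 < ξ := hξmem.1
  -- convexity of G on Ioi 0
  have hGconv : ConvexOn ℝ (Set.Ioi 0) G := by
    have haff : ConvexOn ℝ (Set.Ioi (0:ℝ)) (fun y => deriv phi β + c * (y - β)) := by
      refine ⟨convex_Ioi 0, fun x hx y hy a b ha hb hab => ?_⟩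
      simp only [smul_eq_mul]
      have heq : a * (deriv phi β + c * (x - β)) + b * (deriv phi β + c * (y - β)) =
          deriv phi β + c * (a * x + b * y - β) := by
        linear_combination (deriv phi β - c * β) * hab
      rw [heq]
    exact haff.sub concaveOn_psi_shift
  -- sign of G
  have hGle : ∀ y ∈ Set.Icc ξ β, G y ≤ 0 := by
    intro y hy
    have hseg : y ∈ segment ℝ ξ β := by
      rw [segment_eq_Icc hξβ.le]; exact hy
    have := hGconv.le_on_segment (Set.mem_Ioi.mpr hξ0) (Set.mem_Ioi.mpr hβ) hseg
    rw [hGξ, hGβ] at this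
    simpa using this
  have hGge_right : ∀ y, β < y → 0 ≤ G y := by
    intro y hy
    have hslope := hGconv.slope_mono_adjacent (Set.mem_Ioi.mpr hξ0)
      (Set.mem_Ioi.mpr (by linarith : (0:ℝ) < y)) hξβ hy
    rw [hGξ, hGβ] at hslope
    simp only [sub_zero, zero_sub, zero_div] at hslope
    have h1 : (0:ℝ) ≤ G y / (y - β) := by simpa using hslope
    by_contra hneg
    push_neg at hneg
    have : G y / (y - β) < 0 := div_neg_of_neg_of_pos hneg (by linarith)
    linarith
  have hGge_left : ∀ y, 0 < y → y < ξ → 0 ≤ G y := by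
    intro y hy hyξ
    have hslope := hGconv.slope_mono_adjacent (Set.mem_Ioi.mpr hy)
      (Set.mem_Ioi.mpr hβ) hyξ hξβ
    rw [hGξ, hGβ] at hslope
    simp only [sub_zero, zero_sub, sub_self, zero_div] at hslope
    have h1 : -G y / (ξ - y) ≤ 0 := hslope
    by_contra hneg
    push_neg at hneg
    have : 0 < -G y / (ξ - y) := div_pos (by linarith) (by linarith)
    linarith
  -- monotonicity conclusions
  have hderiv_eq : ∀ y : ℝ, -1 < y → deriv g y = G y := fun y hy => (hder y hy).deriv
  have key : 0 ≤ g t := by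
    rcases le_or_gt t ξ with h1 | h1
    · -- g nondecreasing on [0, ξ]
      have hmono : MonotoneOn g (Set.Icc 0 ξ) := by
        apply monotoneOn_of_deriv_nonneg (convex_Icc 0 ξ)
        · intro y hy
          exact (hcont y (by simp only [Set.mem_Icc] at hy; linarith)).continuousWithinAt
        · intro y hy
          rw [interior_Icc] at hy
          exact ((hder y (by linarith [hy.1])).differentiableAt).differentiableWithinAt
        · intro y hy
          rw [interior_Icc] at hy
          rw [hderiv_eq y (by linarith [hy.1])]
          exact hGge_left y hy.1 hy.2
      have := hmono (Set.mem_Icc.mpr ⟨le_refl 0, by linarith⟩)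
        (Set.mem_Icc.mpr ⟨ht.le, h1⟩) ht.le
      rwa [hg0] at this
    · rcases le_or_gt t β with h2 | h2
      · -- g nonincreasing on [ξ, β]
        have hanti : AntitoneOn g (Set.Icc ξ β) := by
          apply antitoneOn_of_deriv_nonpos (convex_Icc ξ β)
          · intro y hy
            exact (hcont y (by simp only [Set.mem_Icc] at hy; linarith)).continuousWithinAt
          · intro y hy
            rw [interior_Icc] at hy
            exact ((hder y (by linarith [hy.1])).differentiableAt).differentiableWithinAt
          · intro y hy
            rw [interior_Icc] at hy
            rw [hderiv_eq y (by linarith [hy.1])]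
            exact hGle y (Set.mem_Icc.mpr ⟨(hy.1).le, (hy.2).le⟩)
        have := hanti (Set.mem_Icc.mpr ⟨h1.le, h2⟩) (Set.mem_Icc.mpr ⟨hξβ.le, le_refl β⟩) h2
        rwa [hgβ] at this
      · -- g nondecreasing on [β, t]
        have hmono : MonotoneOn g (Set.Icc β t) := by
          apply monotoneOn_of_deriv_nonneg (convex_Icc β t)
          · intro y hy
            exact (hcont y (by simp only [Set.mem_Icc] at hy; linarith)).continuousWithinAt
          · intro y hy
            rw [interior_Icc] at hy
            exact ((hder y (by linarith [hy.1])).differentiableAt).differentiableWithinAt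
          · intro y hy
            rw [interior_Icc] at hy
            rw [hderiv_eq y (by linarith [hy.1])]
            exact hGge_right y hy.1
        have := hmono (Set.mem_Icc.mpr ⟨le_refl β, h2.le⟩) (Set.mem_Icc.mpr ⟨h2.le, le_refl t⟩) h2.le
        rwa [hgβ] at this
  simp only [hg] at key
  linarith

lemma tangent_logGamma {s s₀ : ℝ} (hs : 0 < s) (hs₀ : 0 < s₀) :
    Real.log (Real.Gamma s₀) + (s - s₀) * deriv (fun t : ℝ => Real.log (Real.Gamma t)) s₀ ≤
      Real.log (Real.Gamma s) := by
  have hconv := Real.convexOn_log_Gamma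
  have hdiff : DifferentiableAt ℝ (fun t : ℝ => Real.log (Real.Gamma t)) s₀ :=
    (hasDerivAt_logGamma hs₀).differentiableAt
  have hfun : (Real.log ∘ Real.Gamma) = (fun t : ℝ => Real.log (Real.Gamma t)) := rfl
  rw [hfun] at hconv
  rcases lt_trichotomy s s₀ with h | h | h
  · have := hconv.slope_le_deriv (Set.mem_Ioi.mpr hs) (Set.mem_Ioi.mpr hs₀) h hdiff
    rw [slope_def_field] at this
    have hpos : 0 < s₀ - s := by linarith
    rw [div_le_iff₀ hpos] at this
    set f := fun t : ℝ => Real.log (Real.Gamma t)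
    nlinarith [this]
  · rw [h]; simp
  · have := hconv.deriv_le_slope (Set.mem_Ioi.mpr hs₀) (Set.mem_Ioi.mpr hs) h hdiff
    rw [slope_def_field] at this
    have hpos : 0 < s - s₀ := by linarith
    rw [le_div_iff₀ hpos] at this
    set f := fun t : ℝ => Real.log (Real.Gamma t)
    nlinarith [this]

end Aux

theorem stmt_4 (K N : ℕ) (hK : 1 ≤ K)
    (u : Fin N → ℝ) (hu : ∀ n, 0 ≤ u n) (husum : 0 < ∑ n, u n)
    (z : Fin N → Fin K → ℝ)
    (hz : ∀ n, (∀ i, 0 < z n i) ∧ ∑ i, z n i = 1)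
    (F : (Fin K → ℝ) → ℝ) (q : (Fin K → ℝ) → (Fin K → ℝ) → ℝ)
    (hF : ∀ α, F α =
      ∑ n, u n * ((∑ i, -(α i - 1) * Real.log (z n i)) +
        (∑ i, Real.log (Real.Gamma (α i))) - Real.log (Real.Gamma (∑ i, α i))))
    (hq : ∀ α β, q α β =
      ∑ n, u n * ((∑ i, (-(α i - 1) * Real.log (z n i) - Real.log (α i) +
          phi (β i) + deriv phi (β i) * (α i - β i) +
          curv (β i) / 2 * (α i - β i) ^ 2)) -
        Real.log (Real.Gamma (∑ i, β i)) -
        (∑ i, (α i - β i)) * deriv (fun t : ℝ => Real.log (Real.Gamma t)) (∑ i, β i))) :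
    ∀ β : Fin K → ℝ, (∀ i, 0 < β i) →
      (∀ α : Fin K → ℝ, (∀ i, 0 < α i) → F α ≤ q α β) ∧ q β β = F β := by
  intro β hβ
  have hKpos : 0 < K := hK
  haveI : Nonempty (Fin K) := Fin.pos_iff_nonempty.mp hKpos
  have hβsum : 0 < ∑ i, β i := Finset.sum_pos (fun i _ => hβ i) Finset.univ_nonempty
  constructor
  · intro α hα
    have hαsum : 0 < ∑ i, α i := Finset.sum_pos (fun i _ => hα i) Finset.univ_nonempty
    rw [hF, hq]
    apply Finset.sum_le_sum
    intro n _
    apply mul_le_mul_of_nonneg_left ?_ (hu n)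
    have hA : ∀ i, Real.log (Real.Gamma (α i)) ≤
        -Real.log (α i) + phi (β i) + deriv phi (β i) * (α i - β i) +
          curv (β i) / 2 * (α i - β i) ^ 2 := by
      intro i
      rw [logGamma_eq (hα i)]
      have hcurv : curv (β i) = 2 * (phi 0 - phi (β i) + deriv phi (β i) * β i) / (β i) ^ 2 :=
        if_neg (hβ i).ne'
      rw [hcurv]
      have := majorant (hβ i) (hα i)
      linarith
    have hB := tangent_logGamma hαsum hβsum
    have hsplit : ∑ i, (-(α i - 1) * Real.log (z n i) - Real.log (α i) +
          phi (β i) + deriv phi (β i) * (α i - β i) + curv (β i) / 2 * (α i - β i) ^ 2)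
        = (∑ i, -(α i - 1) * Real.log (z n i)) +
          ∑ i, (-Real.log (α i) + phi (β i) + deriv phi (β i) * (α i - β i) +
            curv (β i) / 2 * (α i - β i) ^ 2) := by
      rw [← Finset.sum_add_distrib]
      apply Finset.sum_congr rfl
      intro i _
      ring
    rw [hsplit]
    have hsum_ineq : ∑ i, Real.log (Real.Gamma (α i)) ≤
        ∑ i, (-Real.log (α i) + phi (β i) + deriv phi (β i) * (α i - β i) +
          curv (β i) / 2 * (α i - β i) ^ 2) :=
      Finset.sum_le_sum (fun i _ => hA i)
    have hsub : (∑ i, (α i - β i)) = (∑ i, α i) - (∑ i, β i) := Finset.sum_sub_distrib _ _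
    rw [hsub]
    linarith [hB, hsum_ineq]
  · rw [hq, hF]
    apply Finset.sum_congr rfl
    intro n _
    congr 1
    have h1 : ∀ i : Fin K, -(β i - 1) * Real.log (z n i) - Real.log (β i) +
        phi (β i) + deriv phi (β i) * (β i - β i) + curv (β i) / 2 * (β i - β i) ^ 2
        = -(β i - 1) * Real.log (z n i) + Real.log (Real.Gamma (β i)) := by
      intro i
      rw [logGamma_eq (hβ i)]
      ring
    rw [Finset.sum_congr rfl (fun i _ => h1 i), Finset.sum_add_distrib]
    have h2 : ∑ i : Fin K, (β i - β i) = 0 := by simp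
    rw [h2]
    ring
end
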